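/- arXiv:1301.7098 — 3 statements merged into one kernel-verified Lean document; each statement's English description precedes it below -/
import Mathlib

section
/- Let U be an open bounded subset of H such that its closure Ū is σ-closed, and let f : Ū → H be a σ-admissible map with 0 ∉ f(∂U). Then f^{-1}(0) is σ-closed and σ-compact (compact in the topology σ). -/
open scoped RealInnerProductSpace
open Filter Topology

/-- The topology generated by the "norm-like" function `N` (its open balls). -/
def topOfNormFun {H : Type*} [AddCommGroup H] (N : H → ℝ) : TopologicalSpace H :=
  TopologicalSpace.generateFrom
    {s | ∃ (u : H) (ε : ℝ), 0 < ε ∧ s = {v | N (v - u) < ε}}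

set_option linter.unusedSectionVars false

section Aux
variable {H : Type*} [NormedAddCommGroup H] [InnerProductSpace ℝ H]
  {b : ℕ → H} (hb : Orthonormal ℝ b) {norm1 : H → ℝ}
  (hnorm1 : ∀ u : H, norm1 u = ∑' j : ℕ, (1 / 2 : ℝ) ^ (j + 1) * |⟪u, b j⟫|)

lemma aux_summable_half : Summable (fun j : ℕ => (1 / 2 : ℝ) ^ (j + 1)) := by
  have h : (fun j : ℕ => (1 / 2 : ℝ) ^ (j + 1)) = fun j : ℕ => (1 / 2 : ℝ) ^ j * (1 / 2) := by
    funext j; rw [pow_succ]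
  rw [h]
  exact (summable_geometric_of_lt_one (by norm_num) (by norm_num : (1/2:ℝ) < 1)).mul_right (1/2)

lemma aux_tsum_half : (∑' j : ℕ, (1 / 2 : ℝ) ^ (j + 1)) = 1 := by
  have h := tsum_geometric_of_lt_one (by norm_num) (by norm_num : (1/2:ℝ) < 1)
  have : (∑' j : ℕ, (1 / 2 : ℝ) ^ (j + 1)) = (∑' j : ℕ, (1 / 2 : ℝ) ^ j) * (1/2) := by
    rw [← tsum_mul_right]; simp [pow_succ]
  rw [this, h]; norm_num

include hb in
lemma aux_term_le (u : H) (j : ℕ) : |⟪u, b j⟫| ≤ ‖u‖ := by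
  have h := abs_real_inner_le_norm u (b j)
  rwa [hb.1 j, mul_one] at h

include hb in
lemma aux_summable (u : H) :
    Summable (fun j : ℕ => (1 / 2 : ℝ) ^ (j + 1) * |⟪u, b j⟫|) := by
  refine Summable.of_nonneg_of_le (fun j => by positivity) (fun j => ?_)
    (aux_summable_half.mul_right ‖u‖)
  exact mul_le_mul_of_nonneg_left (aux_term_le hb u j) (by positivity)

include hb hnorm1 in
lemma aux_nonneg (u : H) : 0 ≤ norm1 u := by
  rw [hnorm1]; exact tsum_nonneg fun j => by positivity

include hb hnorm1 in
lemma aux_le_norm (u : H) : norm1 u ≤ ‖u‖ := by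
  rw [hnorm1]
  calc (∑' j : ℕ, (1 / 2 : ℝ) ^ (j + 1) * |⟪u, b j⟫|)
      ≤ ∑' j : ℕ, (1 / 2 : ℝ) ^ (j + 1) * ‖u‖ := by
        refine Summable.tsum_le_tsum (fun j => ?_) (aux_summable hb u) (aux_summable_half.mul_right ‖u‖)
        exact mul_le_mul_of_nonneg_left (aux_term_le hb u j) (by positivity)
    _ = ‖u‖ := by rw [tsum_mul_right, aux_tsum_half, one_mul]

include hb hnorm1 in
lemma aux_add_le (x y : H) : norm1 (x + y) ≤ norm1 x + norm1 y := by
  rw [hnorm1, hnorm1, hnorm1, ← Summable.tsum_add (aux_summable hb x) (aux_summable hb y)]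
  refine Summable.tsum_le_tsum (fun j => ?_) (aux_summable hb _)
    ((aux_summable hb x).add (aux_summable hb y))
  rw [← mul_add]
  refine mul_le_mul_of_nonneg_left ?_ (by positivity)
  rw [inner_add_left]
  exact abs_add_le _ _

include hb hnorm1 in
lemma aux_tail (x : H) (n : ℕ) :
    norm1 x ≤ (∑ j ∈ Finset.range n, (1 / 2 : ℝ) ^ (j + 1) * |⟪x, b j⟫|)
      + (1 / 2 : ℝ) ^ n * ‖x‖ := by
  rw [hnorm1, ← (aux_summable hb x).sum_add_tsum_nat_add n]
  gcongr
  calc (∑' j : ℕ, (1 / 2 : ℝ) ^ (j + n + 1) * |⟪x, b (j + n)⟫|)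
      ≤ ∑' j : ℕ, (1 / 2 : ℝ) ^ (j + 1) * ((1 / 2 : ℝ) ^ n * ‖x‖) := by
        refine Summable.tsum_le_tsum (fun j => ?_)
          ((summable_nat_add_iff n).2 (aux_summable hb x))
          (aux_summable_half.mul_right _)
        have h1 : ((1:ℝ)/2) ^ (j + n + 1) = (1/2) ^ (j+1) * (1/2) ^ n := by ring
        rw [h1, mul_assoc]
        refine mul_le_mul_of_nonneg_left ?_ (by positivity)
        exact mul_le_mul_of_nonneg_left (aux_term_le hb x _) (by positivity)
    _ = (1 / 2 : ℝ) ^ n * ‖x‖ := by rw [tsum_mul_right, aux_tsum_half, one_mul]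

end Aux

section Aux2
variable {H : Type*} [NormedAddCommGroup H] [InnerProductSpace ℝ H] [CompleteSpace H]
  {b : ℕ → H} (hb : Orthonormal ℝ b)
  (hb_total : (Submodule.span ℝ (Set.range b)).topologicalClosure = ⊤)
  {norm1 : H → ℝ}
  (hnorm1 : ∀ u : H, norm1 u = ∑' j : ℕ, (1 / 2 : ℝ) ^ (j + 1) * |⟪u, b j⟫|)

include hb hb_total hnorm1 in
lemma aux_pos {v : H} (hv : v ≠ 0) : 0 < norm1 v := by
  rcases lt_or_eq_of_le (aux_nonneg hb hnorm1 v) with h | h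
  · exact h
  exfalso
  apply hv
  have hz : ∀ j : ℕ, ⟪v, b j⟫ = 0 := by
    intro j
    have hle : (1 / 2 : ℝ) ^ (j + 1) * |⟪v, b j⟫| ≤ norm1 v := by
      rw [hnorm1]
      exact Summable.le_tsum (aux_summable hb v) j fun i _ => by positivity
    rw [← h] at hle
    have h0 : (1 / 2 : ℝ) ^ (j + 1) * |⟪v, b j⟫| = 0 :=
      le_antisymm hle (by positivity)
    have := mul_eq_zero.1 h0
    rcases this with h1 | h1
    · exact absurd h1 (by positivity)
    · exact abs_eq_zero.1 h1
  have hmem : v ∈ (Submodule.span ℝ (Set.range b))ᗮ := by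
    rw [Submodule.mem_orthogonal]
    intro u hu
    induction hu using Submodule.span_induction with
    | mem x hx => obtain ⟨j, rfl⟩ := hx; rw [real_inner_comm]; exact hz j
    | zero => exact inner_zero_left v
    | add x y _ _ hx hy => rw [inner_add_left, hx, hy, add_zero]
    | smul a x _ hx => rw [real_inner_smul_left, hx, mul_zero]
  rw [Submodule.topologicalClosure_eq_top_iff.1 hb_total] at hmem
  exact hmem

include hnorm1 in
lemma aux_zero : norm1 (0 : H) = 0 := by
  rw [hnorm1]
  simp

include hnorm1 in
lemma aux_neg (v : H) : norm1 (-v) = norm1 v := by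
  rw [hnorm1, hnorm1]
  congr 1; funext j; rw [inner_neg_left, abs_neg]

include hb hb_total hnorm1 in
lemma aux_isClosed_zero : IsClosed[topOfNormFun norm1] ({0} : Set H) := by
  letI : TopologicalSpace H := topOfNormFun norm1
  rw [← isOpen_compl_iff]
  have heq : ({(0 : H)}ᶜ) = ⋃ v : {v : H // v ≠ 0}, {w | norm1 (w - ↑v) < norm1 ↑v} := by
    ext w
    simp only [Set.mem_compl_iff, Set.mem_singleton_iff, Set.mem_iUnion, Set.mem_setOf_eq]
    constructor
    · intro hw
      refine ⟨⟨w, hw⟩, ?_⟩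
      simp only [sub_self]
      rw [aux_zero hnorm1]
      exact aux_pos hb hb_total hnorm1 hw
    · rintro ⟨⟨v, hv⟩, hwv⟩ rfl
      rw [zero_sub, aux_neg hnorm1] at hwv
      exact lt_irrefl _ hwv
  rw [heq]
  exact isOpen_iUnion fun v =>
    TopologicalSpace.isOpen_generateFrom_of_mem ⟨v, norm1 v, aux_pos hb hb_total hnorm1 v.2, rfl⟩

end Aux2

section Aux3
variable {H : Type*} [NormedAddCommGroup H] [InnerProductSpace ℝ H] [CompleteSpace H]
  {b : ℕ → H} (hb : Orthonormal ℝ b)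
  (hb_total : (Submodule.span ℝ (Set.range b)).topologicalClosure = ⊤)
  {norm1 : H → ℝ}
  (hnorm1 : ∀ u : H, norm1 u = ∑' j : ℕ, (1 / 2 : ℝ) ^ (j + 1) * |⟪u, b j⟫|)

lemma aux_ball_open (w : H) (ε : ℝ) (hε : 0 < ε) :
    IsOpen[topOfNormFun norm1] {v : H | norm1 (v - w) < ε} :=
  TopologicalSpace.isOpen_generateFrom_of_mem ⟨w, ε, hε, rfl⟩

include hb hnorm1 in
lemma aux_coord_le (x : H) (j : ℕ) : (1 / 2 : ℝ) ^ (j + 1) * |⟪x, b j⟫| ≤ norm1 x := by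
  rw [hnorm1]
  exact Summable.le_tsum (aux_summable hb x) j fun i _ => by positivity

include hb hnorm1 in
lemma aux_coord_cont (j : ℕ) :
    @Continuous H ℝ (topOfNormFun norm1) _ (fun v => ⟪v, b j⟫) := by
  letI : TopologicalSpace H := topOfNormFun norm1
  rw [continuous_iff_continuousAt]
  intro v
  rw [ContinuousAt, Metric.tendsto_nhds]
  intro ε hε
  have hδ : (0:ℝ) < ε * (1/2) ^ (j+1) := by positivity
  have hmem : {w : H | norm1 (w - v) < ε * (1/2) ^ (j+1)} ∈ 𝓝 v := by
    refine (aux_ball_open v _ hδ).mem_nhds ?_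
    show norm1 (v - v) < _
    rw [sub_self, aux_zero hnorm1]
    exact hδ
  filter_upwards [hmem] with w hw
  rw [Real.dist_eq]
  have h1 : |⟪w, b j⟫ - ⟪v, b j⟫| = |⟪w - v, b j⟫| := by rw [inner_sub_left]
  rw [h1]
  have h2 := (aux_coord_le hb hnorm1 (w - v) j).trans_lt hw
  have h3 : (0:ℝ) < (1/2) ^ (j+1) := by positivity
  rw [mul_comm] at h2
  exact (mul_lt_mul_iff_left₀ h3).mp h2

include hb hb_total hnorm1 in
lemma aux_closure_bound {U : Set H} {M : ℝ} (hMnn : 0 ≤ M)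
    (hU : U ⊆ Metric.closedBall (0 : H) M) :
    ∀ u ∈ @closure H (topOfNormFun norm1) U, ‖u‖ ≤ M := by
  letI : TopologicalSpace H := topOfNormFun norm1
  intro u hu
  have hps : ∀ s : Finset ℕ, (∑ j ∈ s, ⟪u, b j⟫ ^ 2) ≤ M ^ 2 := by
    intro s
    have hcont : Continuous (fun v : H => ∑ j ∈ s, ⟪v, b j⟫ ^ 2) :=
      continuous_finset_sum s fun j _ => (aux_coord_cont hb hnorm1 j).pow 2
    have hclosed : IsClosed {v : H | (∑ j ∈ s, ⟪v, b j⟫ ^ 2) ≤ M ^ 2} :=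
      isClosed_le hcont continuous_const
    have hsub : U ⊆ {v : H | (∑ j ∈ s, ⟪v, b j⟫ ^ 2) ≤ M ^ 2} := by
      intro v hv
      have hvM : ‖v‖ ≤ M := by
        have := hU hv
        rwa [Metric.mem_closedBall, dist_zero_right] at this
      show (∑ j ∈ s, ⟪v, b j⟫ ^ 2) ≤ M ^ 2
      calc (∑ j ∈ s, ⟪v, b j⟫ ^ 2) = ∑ j ∈ s, ‖⟪b j, v⟫‖ ^ 2 := by
            refine Finset.sum_congr rfl fun j _ => ?_
            rw [Real.norm_eq_abs, sq_abs, real_inner_comm]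
        _ ≤ ‖v‖ ^ 2 := hb.sum_inner_products_le v
        _ ≤ M ^ 2 := by nlinarith [norm_nonneg v]
    exact closure_minimal hsub hclosed hu
  set B : HilbertBasis ℕ ℝ H := HilbertBasis.mk hb (le_of_eq hb_total.symm) with hB
  have hsum : HasSum (fun j => ⟪u, b j⟫ ^ 2) (‖u‖ ^ 2) := by
    have h1 := B.hasSum_inner_mul_inner u u
    have h2 : ∀ j : ℕ, ⟪u, B j⟫ * ⟪B j, u⟫ = ⟪u, b j⟫ ^ 2 := by
      intro j
      rw [hB, HilbertBasis.coe_mk, real_inner_comm (b j) u]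
      ring
    have h3 : ⟪u, u⟫ = ‖u‖ ^ 2 := real_inner_self_eq_norm_sq u
    have h4 : (fun j : ℕ => ⟪u, B j⟫ * ⟪B j, u⟫) = fun j : ℕ => ⟪u, b j⟫ ^ 2 := funext h2
    rw [h3, h4] at h1
    exact h1
  have := hasSum_le_of_sum_le hsum hps
  nlinarith [norm_nonneg u]

end Aux3

/-- If `U` is open and bounded with `σ`-closed closure and
`f : Ū → H` is a `σ`-admissible map with `0 ∉ f(∂U)`, then `f⁻¹(0)` is `σ`-closed
and `σ`-compact. -/
theorem generalized_fountain_stmt_1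
    {H : Type*} [NormedAddCommGroup H] [InnerProductSpace ℝ H] [CompleteSpace H]
    [TopologicalSpace.SeparableSpace H]
    (b : ℕ → H) (hb : Orthonormal ℝ b)
    (hb_total : (Submodule.span ℝ (Set.range b)).topologicalClosure = ⊤)
    (norm1 : H → ℝ)
    (hnorm1 : ∀ u : H, norm1 u = ∑' j : ℕ, (1 / 2 : ℝ) ^ (j + 1) * |⟪u, b j⟫|)
    (σ : TopologicalSpace H) (hσ : σ = topOfNormFun norm1)
    (U : Set H) (hU_open : IsOpen U) (hU_bdd : Bornology.IsBounded U)
    (hU_closed : IsClosed[σ] (closure U))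
    (f : H → H)
    (hf_cont : @ContinuousOn H H σ σ f (closure U))
    (hf_fin : ∀ u ∈ U, ∃ N : Set H, N ∈ @nhds H σ u ∧
      ∃ F : Submodule ℝ H, FiniteDimensional ℝ F ∧ ∀ v ∈ N ∩ U, v - f v ∈ (F : Set H))
    (hf_bdry : ∀ u ∈ frontier U, f u ≠ 0) :
    IsClosed[σ] {u ∈ closure U | f u = 0} ∧ @IsCompact H σ {u ∈ closure U | f u = 0} := by
  subst hσ
  letI : TopologicalSpace H := topOfNormFun norm1
  set S : Set H := {u ∈ closure U | f u = 0} with hS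
  -- closedness
  have hSeq : S = closure U ∩ f ⁻¹' {0} := by
    ext u; simp [hS, Set.mem_sep_iff]
  have hSclosed : IsClosed[topOfNormFun norm1] S := by
    rw [hSeq]
    exact hf_cont.preimage_isClosed_of_isClosed hU_closed
      (aux_isClosed_zero hb hb_total hnorm1)
  refine ⟨hSclosed, ?_⟩
  -- compactness via ultrafilters
  rw [isCompact_iff_ultrafilter_le_nhds]
  intro F hF
  have hSF : S ∈ F := le_principal_iff.mp hF
  -- bound
  obtain ⟨M0, hM0⟩ := hU_bdd.subset_closedBall (0 : H)
  set M : ℝ := max M0 0 with hMdef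
  have hMnn : (0 : ℝ) ≤ M := le_max_right _ _
  have hUM : U ⊆ Metric.closedBall (0 : H) M :=
    hM0.trans (Metric.closedBall_subset_closedBall (le_max_left _ _))
  have hMS := aux_closure_bound hb hb_total hnorm1 hMnn hUM
  have hM : ∀ u ∈ S, ‖u‖ ≤ M := fun u hu => hMS u hu.1
  -- coordinate limits
  have hex : ∀ j : ℕ, ∃ x : ℝ, Tendsto (fun u : H => ⟪u, b j⟫) (F : Filter H) (𝓝 x) := by
    intro j
    have hmap : (F.map (fun u : H => ⟪u, b j⟫) : Filter ℝ) ≤ 𝓟 (Set.Icc (-M) M) := by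
      rw [le_principal_iff]
      refine Filter.mem_map.2 (Filter.mem_of_superset hSF ?_)
      intro u hu
      have h1 : |⟪u, b j⟫| ≤ M := (aux_term_le hb u j).trans (hM u hu)
      exact Set.mem_Icc.2 (abs_le.1 h1)
    obtain ⟨x, -, hx⟩ := isCompact_Icc.ultrafilter_le_nhds (F.map _) hmap
    exact ⟨x, hx⟩
  choose c hc using hex
  -- Bessel for the limit coordinates
  have hBessel : ∀ s : Finset ℕ, (∑ j ∈ s, (c j) ^ 2) ≤ M ^ 2 := by
    intro s
    have htend : Tendsto (fun u : H => ∑ j ∈ s, ⟪u, b j⟫ ^ 2) (F : Filter H)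
        (𝓝 (∑ j ∈ s, (c j) ^ 2)) :=
      tendsto_finset_sum s fun j _ => (hc j).pow 2
    refine le_of_tendsto htend ?_
    filter_upwards [hSF] with u hu
    calc (∑ j ∈ s, ⟪u, b j⟫ ^ 2) = ∑ j ∈ s, ‖⟪b j, u⟫‖ ^ 2 := by
          refine Finset.sum_congr rfl fun j _ => ?_
          rw [Real.norm_eq_abs, sq_abs, real_inner_comm]
      _ ≤ ‖u‖ ^ 2 := hb.sum_inner_products_le u
      _ ≤ M ^ 2 := by
          have := hM u hu
          nlinarith [norm_nonneg u]
  -- build the limit point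
  have hc2 : Memℓp c 2 := by
    refine memℓp_gen' (C := M ^ 2) fun s => ?_
    have h2 : ((2 : ENNReal)).toReal = (2 : ℝ) := by simp
    calc (∑ j ∈ s, ‖c j‖ ^ ((2 : ENNReal)).toReal) = ∑ j ∈ s, (c j) ^ 2 := by
          refine Finset.sum_congr rfl fun j _ => ?_
          rw [h2, Real.norm_eq_abs]
          rw [show ((2:ℝ)) = ((2:ℕ):ℝ) by norm_num, Real.rpow_natCast, sq_abs]
      _ ≤ M ^ 2 := hBessel s
  set B : HilbertBasis ℕ ℝ H := HilbertBasis.mk hb (le_of_eq hb_total.symm) with hB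
  set u0 : H := B.repr.symm ⟨c, hc2⟩ with hu0
  have hcoord : ∀ j : ℕ, ⟪u0, b j⟫ = c j := by
    intro j
    have h1 : B.repr u0 j = c j := by
      rw [hu0, LinearIsometryEquiv.apply_symm_apply]
    rw [B.repr_apply_apply] at h1
    rw [real_inner_comm]
    rw [← h1]
    congr 1
    rw [hB, HilbertBasis.coe_mk]
  -- F converges to u0 in the σ topology
  have key : ∀ δ : ℝ, 0 < δ → {v : H | norm1 (v - u0) < δ} ∈ F := by
    intro δ hδ
    obtain ⟨n, hn⟩ := exists_pow_lt_of_lt_one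
      (show (0:ℝ) < δ / 2 / (M + ‖u0‖ + 1) by positivity) (by norm_num : (1/2:ℝ) < 1)
    have htail : (1/2:ℝ) ^ n * (M + ‖u0‖) < δ / 2 := by
      have h1 : (1/2:ℝ) ^ n * (M + ‖u0‖ + 1) < δ / 2 := by
        rw [div_div] at hn
        have h2 : (0:ℝ) < M + ‖u0‖ + 1 := by positivity
        calc (1/2:ℝ) ^ n * (M + ‖u0‖ + 1) < δ / (2 * (M + ‖u0‖ + 1)) * (M + ‖u0‖ + 1) := by
              exact mul_lt_mul_of_pos_right hn h2
          _ = δ / 2 := by field_simp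
      nlinarith [pow_pos (show (0:ℝ) < 1/2 by norm_num) n]
    have hhead : Tendsto
        (fun v : H => ∑ j ∈ Finset.range n, (1/2:ℝ) ^ (j+1) * |⟪v, b j⟫ - c j|)
        (F : Filter H) (𝓝 0) := by
      have h0 : (0:ℝ) = ∑ j ∈ Finset.range n, (1/2:ℝ) ^ (j+1) * |c j - c j| := by simp
      rw [h0]
      exact tendsto_finset_sum _ fun j _ =>
        (((hc j).sub_const (c j)).abs).const_mul _
    have hev : ∀ᶠ v in (F : Filter H),
        (∑ j ∈ Finset.range n, (1/2:ℝ) ^ (j+1) * |⟪v, b j⟫ - c j|) < δ / 2 :=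
      hhead.eventually_lt_const (by linarith)
    filter_upwards [hSF, hev] with v hvS hvhead
    have hb1 : norm1 (v - u0) ≤
        (∑ j ∈ Finset.range n, (1/2:ℝ) ^ (j+1) * |⟪v - u0, b j⟫|) + (1/2:ℝ)^n * ‖v - u0‖ :=
      aux_tail hb hnorm1 (v - u0) n
    have hb2 : (∑ j ∈ Finset.range n, (1/2:ℝ) ^ (j+1) * |⟪v - u0, b j⟫|)
        = ∑ j ∈ Finset.range n, (1/2:ℝ) ^ (j+1) * |⟪v, b j⟫ - c j| := by
      refine Finset.sum_congr rfl fun j _ => ?_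
      rw [inner_sub_left, hcoord j]
    have hb3 : ‖v - u0‖ ≤ M + ‖u0‖ := by
      calc ‖v - u0‖ ≤ ‖v‖ + ‖u0‖ := norm_sub_le _ _
        _ ≤ M + ‖u0‖ := by have := hM v hvS; linarith
    have hb4 : (1/2:ℝ)^n * ‖v - u0‖ ≤ (1/2:ℝ)^n * (M + ‖u0‖) :=
      mul_le_mul_of_nonneg_left hb3 (by positivity)
    calc norm1 (v - u0) ≤ _ + (1/2:ℝ)^n * ‖v - u0‖ := hb1
      _ < δ / 2 + δ / 2 := by rw [hb2]; exact add_lt_add_of_lt_of_le hvhead (hb4.trans htail.le)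
      _ = δ := by ring
  have hFle : (F : Filter H) ≤ 𝓝 u0 := by
    have hnh : 𝓝 u0 =
        ⨅ s ∈ {s : Set H | u0 ∈ s ∧
          s ∈ {s : Set H | ∃ (u : H) (ε : ℝ), 0 < ε ∧ s = {v | norm1 (v - u) < ε}}}, 𝓟 s :=
      TopologicalSpace.nhds_generateFrom
    rw [hnh]
    refine le_iInf₂ fun s hs => ?_
    obtain ⟨hus, w, ε, hε, rfl⟩ := hs
    rw [le_principal_iff]
    have hwu : norm1 (u0 - w) < ε := hus
    filter_upwards [key (ε - norm1 (u0 - w)) (by linarith)] with v hv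
    have htri : norm1 (v - w) ≤ norm1 (v - u0) + norm1 (u0 - w) := by
      have := aux_add_le hb hnorm1 (v - u0) (u0 - w)
      rwa [sub_add_sub_cancel] at this
    show norm1 (v - w) < ε
    linarith
  have hu0S : u0 ∈ S := by
    have hcl : u0 ∈ closure S := by
      rw [mem_closure_iff_clusterPt]
      exact Filter.neBot_of_le (le_inf hFle hF)
    rwa [hSclosed.closure_eq] at hcl
  exact ⟨u0, hu0S, hFle⟩
end

section
/- For every k ≥ 2 and every u ∈ Y_k one has |||u|||_k ≤ (3/2)|||u||| and |||u||| ≤ 2^{k+1} |||u|||_k; hence the norms |||·||| and |||·|||_k are equivalent on Y_k. Moreover, for every k the orthogonal projection P_k : X → Y_k is τ-continuous. -/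
open scoped RealInnerProductSpace
open Filter Topology

private lemma proj_unique {X : Type*} [NormedAddCommGroup X] [InnerProductSpace ℝ X]
    (V : Submodule ℝ X) {u a b : X} (ha : a ∈ V) (hb : b ∈ V)
    (ha' : u - a ∈ Vᗮ) (hb' : u - b ∈ Vᗮ) : a = b := by
  have h1 : a - b ∈ V := V.sub_mem ha hb
  have h2 : a - b ∈ Vᗮ := by
    have h := Vᗮ.sub_mem hb' ha'
    rw [show u - b - (u - a) = a - b by abel] at h
    exact h
  have h3 : ⟪a - b, a - b⟫ = 0 := Submodule.inner_right_of_mem_orthogonal h1 h2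
  rwa [inner_self_eq_zero, sub_eq_zero] at h3

private lemma summable_aux {X : Type*} [NormedAddCommGroup X] [InnerProductSpace ℝ X]
    (v : X) (f : ℕ → X) (hf : ∀ j, ‖f j‖ = 1) :
    Summable (fun j => (1/2:ℝ)^(j+1) * |⟪v, f j⟫|) := by
  have hg : Summable (fun j : ℕ => (1/2:ℝ)^(j+1) * ‖v‖) := by
    have : Summable (fun j : ℕ => (1/2:ℝ)^j) :=
      summable_geometric_of_lt_one (by norm_num) (by norm_num)
    simpa [pow_succ, mul_comm, mul_assoc] using (this.mul_right ((1/2) * ‖v‖))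
  refine Summable.of_nonneg_of_le (fun j => by positivity) (fun j => ?_) hg
  have := abs_real_inner_le_norm v (f j)
  rw [hf j, mul_one] at this
  exact mul_le_mul_of_nonneg_left this (by positivity)

private lemma geom_fin_sum (n : ℕ) : ∑ j ∈ Finset.range n, (1/2:ℝ)^(j+1) = 1 - (1/2)^n := by
  induction n with
  | zero => simp
  | succ m ih => rw [Finset.sum_range_succ, ih]; ring

private lemma span_rep {X : Type*} [NormedAddCommGroup X] [InnerProductSpace ℝ X]
    (e : ℕ → X) (he : Orthonormal ℝ e) (k : ℕ) {z : X}
    (hz : z ∈ Submodule.span ℝ (e '' Set.Iic k)) :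
    ∑ j ∈ Finset.range (k+1), ⟪z, e j⟫ • e j = z := by
  induction hz using Submodule.span_induction with
  | mem x hx =>
      obtain ⟨i, hi, rfl⟩ := hx
      have hik : i ∈ Finset.range (k+1) := Finset.mem_range.2 (Nat.lt_succ_of_le hi)
      have hite := orthonormal_iff_ite.mp he
      calc ∑ j ∈ Finset.range (k+1), ⟪e i, e j⟫ • e j
          = ∑ j ∈ Finset.range (k+1), if i = j then e j else 0 := by
            refine Finset.sum_congr rfl fun j _ => ?_
            rw [hite i j]; split <;> simp
        _ = e i := by rw [Finset.sum_ite_eq]; simp [hik]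
  | zero => simp
  | add x y _ _ hx hy =>
      simp only [inner_add_left, add_smul, Finset.sum_add_distrib, hx, hy]
  | smul a x _ hx =>
      simp only [real_inner_smul_left, ← smul_smul, ← Finset.smul_sum, hx]

private lemma span_orth {X : Type*} [NormedAddCommGroup X] [InnerProductSpace ℝ X]
    (e : ℕ → X) (he : Orthonormal ℝ e) (k i : ℕ) (hi : i ≤ k) :
    e i ∈ (Submodule.span ℝ (e '' Set.Ici (k+1)))ᗮ := by
  rw [Submodule.mem_orthogonal']
  intro x hx
  induction hx using Submodule.span_induction with
  | mem x hx =>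
      obtain ⟨m, hm, rfl⟩ := hx
      have hm' : k + 1 ≤ m := hm
      have := orthonormal_iff_ite.mp he i m
      rw [this, if_neg (by omega)]
  | zero => simp
  | add x y _ _ hx hy => rw [inner_add_right, hx, hy, add_zero]
  | smul a x _ hx => rw [real_inner_smul_right, hx, mul_zero]


private lemma mem_of_range_span_closure {X : Type*} [NormedAddCommGroup X]
    [InnerProductSpace ℝ X] (f : ℕ → X) (W : Submodule ℝ X)
    (h : (Submodule.span ℝ (Set.range f)).topologicalClosure = W) : ∀ j, f j ∈ W := by
  intro j
  rw [← h]
  exact (Submodule.span ℝ (Set.range f)).le_topologicalClosure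
    (Submodule.subset_span ⟨j, rfl⟩)

private lemma perp_aux {X : Type*} [NormedAddCommGroup X] [InnerProductSpace ℝ X]
    [CompleteSpace X] (Y : Submodule ℝ X) (e : ℕ → X) (he : Orthonormal ℝ e)
    (heZ : ∀ j, e j ∈ Yᗮ) (k : ℕ) :
    Y ⊔ Submodule.span ℝ (e '' Set.Iic k) ≤
      ((Submodule.span ℝ (e '' Set.Ici (k+1))).topologicalClosure)ᗮ := by
  have hZo : ((Submodule.span ℝ (e '' Set.Ici (k+1))).topologicalClosure)ᗮ
      = (Submodule.span ℝ (e '' Set.Ici (k+1)))ᗮ := by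
    rw [← Submodule.orthogonal_orthogonal_eq_closure,
      Submodule.triorthogonal_eq_orthogonal]
  rw [hZo]
  apply sup_le
  · have h1 : Submodule.span ℝ (e '' Set.Ici (k+1)) ≤ Yᗮ := by
      rw [Submodule.span_le]; rintro x ⟨j, _, rfl⟩; exact heZ j
    exact Y.le_orthogonal_orthogonal.trans (Submodule.orthogonal_le h1)
  · rw [Submodule.span_le]
    rintro x ⟨i, hi, rfl⟩
    exact span_orth e he k i hi

/-- On `Y_k` one has `|||u|||_k ≤ (3/2)|||u|||` and
`|||u||| ≤ 2^(k+1) |||u|||_k`, so the two norms are equivalent on `Y_k`; moreover the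
orthogonal projection `P_k : X → Y_k` is `τ`-continuous. -/
theorem generalized_fountain_stmt_6
    {X : Type*} [NormedAddCommGroup X] [InnerProductSpace ℝ X] [CompleteSpace X]
    (Y : Submodule ℝ X) (hY_closed : IsClosed (Y : Set X))
    (θ : ℕ → X) (hθ : Orthonormal ℝ θ)
    (hθ_span : (Submodule.span ℝ (Set.range θ)).topologicalClosure = Y)
    -- (e j) is an orthonormal basis of Z := Y^⊥
    (e : ℕ → X) (he : Orthonormal ℝ e)
    (he_span : (Submodule.span ℝ (Set.range e)).topologicalClosure = Yᗮ)
    (k : ℕ) (hk : 2 ≤ k)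
    -- Y_k = Y ⊕ (⊕_{j=0}^k ℝ e_j),  Z_{k+1} = closure(⊕_{j=k+1}^∞ ℝ e_j)
    (Yk Zk1 : Submodule ℝ X)
    (hYk : Yk = Y ⊔ Submodule.span ℝ (e '' Set.Iic k))
    (hZk1 : Zk1 = (Submodule.span ℝ (e '' Set.Ici (k + 1))).topologicalClosure)
    (P Q : X → X)
    (hP : ∀ u : X, P u ∈ Y ∧ u - P u ∈ Yᗮ)
    (hQ : ∀ u : X, Q u = u - P u)
    -- orthogonal projections P_k onto Y_k and Q_{k+1} onto Z_{k+1}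
    (Pk Qk1 : X → X)
    (hPk : ∀ u : X, Pk u ∈ Yk ∧ u - Pk u ∈ Ykᗮ)
    (hQk1 : ∀ u : X, Qk1 u ∈ Zk1 ∧ u - Qk1 u ∈ Zk1ᗮ)
    -- the sequence e'
    (e' : ℕ → X)
    (he' : ∀ j : ℕ, e' j = if j ≤ k then e j else θ (j - k - 1))
    (tnorm : X → ℝ)
    (htnorm : ∀ u : X,
      tnorm u = max (∑' j : ℕ, (1 / 2 : ℝ) ^ (j + 1) * |⟪P u, θ j⟫|) ‖Q u‖)
    (tnormk : X → ℝ)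
    (htnormk : ∀ u : X,
      tnormk u = max (∑' j : ℕ, (1 / 2 : ℝ) ^ (j + 1) * |⟪Pk u, e' j⟫|) ‖Qk1 u‖)
    (τ : TopologicalSpace X) (hτ : τ = topOfNormFun tnorm) :
    (∀ u : X, u ∈ Yk →
      tnormk u ≤ (3 / 2 : ℝ) * tnorm u ∧ tnorm u ≤ (2 : ℝ) ^ (k + 1) * tnormk u) ∧
      Continuous[τ, τ] Pk := by
  -- basic memberships
  have hθY : ∀ j, θ j ∈ Y := mem_of_range_span_closure θ Y hθ_span
  have heZ : ∀ j, e j ∈ Yᗮ := mem_of_range_span_closure e Yᗮ he_span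
  have he'norm : ∀ j, ‖e' j‖ = 1 := by
    intro j; rw [he' j]; split
    · exact he.1 _
    · exact hθ.1 _
  have hYleYk : Y ≤ Yk := hYk ▸ le_sup_left
  have hspanYk : Submodule.span ℝ (e '' Set.Iic k) ≤ Yᗮ := by
    rw [Submodule.span_le]
    rintro x ⟨j, _, rfl⟩
    exact heZ j
  have hYkZ : Yk ≤ Zk1ᗮ := by
    rw [hYk, hZk1]
    exact perp_aux Y e he heZ k
  -- characterisations of the projections
  have hP_eq : ∀ {a b : X}, a ∈ Y → b - a ∈ Yᗮ → P b = a := fun {a b} ha h =>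
    proj_unique Y (hP b).1 ha (hP b).2 h
  have hPk_eq : ∀ {a b : X}, a ∈ Yk → b - a ∈ Ykᗮ → Pk b = a := fun {a b} ha h =>
    proj_unique Yk (hPk b).1 ha (hPk b).2 h
  have hPadd : ∀ a b, P (a + b) = P a + P b := by
    intro a b
    refine hP_eq (Y.add_mem (hP a).1 (hP b).1) ?_
    have h := Yᗮ.add_mem (hP a).2 (hP b).2
    rwa [show a - P a + (b - P b) = a + b - (P a + P b) by abel] at h
  have hPksub : ∀ a b, Pk (a - b) = Pk a - Pk b := by
    intro a b
    refine hPk_eq (Yk.sub_mem (hPk a).1 (hPk b).1) ?_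
    have h := Ykᗮ.sub_mem (hPk a).2 (hPk b).2
    rwa [show a - Pk a - (b - Pk b) = a - b - (Pk a - Pk b) by abel] at h
  have hP0 : P 0 = 0 := hP_eq Y.zero_mem (by simpa using Yᗮ.zero_mem)
  -- summability
  have hsum : ∀ v : X, Summable (fun j => (1/2:ℝ)^(j+1) * |⟪P v, θ j⟫|) :=
    fun v => summable_aux _ θ (fun j => hθ.1 j)
  have htzero : tnorm 0 = 0 := by
    rw [htnorm 0, hP0, hQ 0, hP0]
    simp
  have htadd : ∀ a b, tnorm (a + b) ≤ tnorm a + tnorm b := by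
    intro a b
    rw [htnorm (a+b), htnorm a, htnorm b, hQ, hQ, hQ, hPadd]
    apply max_le
    · have h1 : ∑' j : ℕ, (1/2:ℝ)^(j+1) * |⟪P a + P b, θ j⟫| ≤
          ∑' j : ℕ, ((1/2:ℝ)^(j+1) * |⟪P a, θ j⟫| + (1/2:ℝ)^(j+1) * |⟪P b, θ j⟫|) := by
        refine Summable.tsum_le_tsum (fun j => ?_) ?_ ((hsum a).add (hsum b))
        · rw [inner_add_left, ← mul_add]
          exact mul_le_mul_of_nonneg_left (abs_add_le _ _) (by positivity)
        · exact summable_aux (P a + P b) θ (fun j => hθ.1 j)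
      rw [Summable.tsum_add (hsum a) (hsum b)] at h1
      exact h1.trans (add_le_add (le_max_left _ _) (le_max_left _ _))
    · have hq : a + b - (P a + P b) = (a - P a) + (b - P b) := by abel
      rw [hq]
      exact (norm_add_le _ _).trans (add_le_add (le_max_right _ _) (le_max_right _ _))
  have hPPk : ∀ w, P (Pk w) = P w := by
    intro w
    refine hP_eq (hP w).1 ?_
    have h1 : w - Pk w ∈ Yᗮ := Submodule.orthogonal_le hYleYk (hPk w).2
    have h := Yᗮ.neg_mem (Yᗮ.sub_mem h1 (hP w).2)
    rwa [show -(w - Pk w - (w - P w)) = Pk w - P w by abel] at h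
  have hPknorm : ∀ v, ‖Pk v‖ ≤ ‖v‖ := by
    intro v
    have h0 : ⟪Pk v, v - Pk v⟫ = 0 :=
      Submodule.inner_right_of_mem_orthogonal (hPk v).1 (hPk v).2
    have h1 := norm_add_sq_real (Pk v) (v - Pk v)
    rw [show Pk v + (v - Pk v) = v by abel, h0] at h1
    nlinarith [norm_nonneg (Pk v), norm_nonneg v, norm_nonneg (v - Pk v)]
  have hmono : ∀ w, tnorm (Pk w) ≤ tnorm w := by
    intro w
    rw [htnorm (Pk w), htnorm w, hQ, hQ, hPPk w]
    refine max_le (le_max_left _ _) (le_trans ?_ (le_max_right _ _))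
    have hrep : Pk (w - P w) = Pk w - P w := by
      refine hPk_eq (Yk.sub_mem (hPk w).1 (hYleYk (hP w).1)) ?_
      rw [show w - P w - (Pk w - P w) = w - Pk w by abel]
      exact (hPk w).2
    calc ‖Pk w - P w‖ = ‖Pk (w - P w)‖ := by rw [hrep]
      _ ≤ ‖w - P w‖ := hPknorm _
  constructor
  · -- the norm inequalities on Y_k
    intro u hu
    obtain ⟨y, hy, z, hz, hyz⟩ := Submodule.mem_sup.1 (hYk ▸ hu)
    have hPu : P u = y := by
      refine hP_eq hy ?_
      rw [← hyz, show y + z - y = z by abel]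
      exact hspanYk hz
    have hQu : Q u = z := by rw [hQ, hPu, ← hyz]; abel
    have hPku : Pk u = u := hPk_eq hu (by simpa using Ykᗮ.zero_mem)
    have hQk1u : Qk1 u = 0 :=
      proj_unique Zk1 (hQk1 u).1 Zk1.zero_mem (hQk1 u).2 (by simpa using hYkZ hu)
    have hiθ : ∀ j, ⟪P u, θ j⟫ = ⟪u, θ j⟫ := by
      intro j
      have hz' : ⟪z, θ j⟫ = 0 := by
        rw [real_inner_comm]
        exact Submodule.inner_right_of_mem_orthogonal (hθY j) (hspanYk hz)
      rw [hPu, ← hyz, inner_add_left, hz', add_zero]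
    have hie : ∀ j, ⟪u, e j⟫ = ⟪z, e j⟫ := by
      intro j
      rw [← hyz, inner_add_left,
        Submodule.inner_right_of_mem_orthogonal hy (heZ j), zero_add]
    set S := ∑' j : ℕ, (1/2:ℝ)^(j+1) * |⟪u, θ j⟫| with hS
    set A := ∑ j ∈ Finset.range (k+1), (1/2:ℝ)^(j+1) * |⟪u, e j⟫| with hA
    have hSnn : 0 ≤ S := tsum_nonneg (fun j => by positivity)
    have hAnn : 0 ≤ A := Finset.sum_nonneg (fun j _ => by positivity)
    have htn : tnorm u = max S ‖z‖ := by
      rw [htnorm u, hQu]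
      congr 1
      exact tsum_congr fun j => by rw [hiθ j]
    have hsplit : tnormk u = A + (1/2:ℝ)^(k+1) * S := by
      rw [htnormk u, hPku, hQk1u, norm_zero]
      have hsumf : Summable (fun j => (1/2:ℝ)^(j+1) * |⟪u, e' j⟫|) :=
        summable_aux u e' he'norm
      rw [max_eq_left (tsum_nonneg fun j => by positivity),
        ← Summable.sum_add_tsum_nat_add (k+1) hsumf]
      congr 1
      · refine Finset.sum_congr rfl fun j hj => ?_
        have hj' := Finset.mem_range.1 hj
        rw [he' j, if_pos (by omega)]
      · have hterm : ∀ i : ℕ, (1/2:ℝ)^(i+(k+1)+1) * |⟪u, e' (i+(k+1))⟫|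
            = (1/2:ℝ)^(k+1) * ((1/2:ℝ)^(i+1) * |⟪u, θ i⟫|) := by
          intro i
          rw [he' (i+(k+1)), if_neg (by omega), show i+(k+1)-k-1 = i by omega,
            show i+(k+1)+1 = (k+1)+(i+1) by omega, pow_add]
          ring
        rw [tsum_congr hterm, tsum_mul_left]
    have hcz : ∀ j, |⟪u, e j⟫| ≤ ‖z‖ := by
      intro j
      rw [hie j]
      have h := abs_real_inner_le_norm z (e j)
      rwa [he.1 j, mul_one] at h
    have hAz : A ≤ ‖z‖ := by
      have hnn : (0:ℝ) ≤ (1/2:ℝ)^(k+1) := by positivity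
      calc A ≤ ∑ j ∈ Finset.range (k+1), (1/2:ℝ)^(j+1) * ‖z‖ :=
          Finset.sum_le_sum fun j _ => mul_le_mul_of_nonneg_left (hcz j) (by positivity)
        _ = (1 - (1/2:ℝ)^(k+1)) * ‖z‖ := by rw [← Finset.sum_mul, geom_fin_sum]
        _ ≤ 1 * ‖z‖ := mul_le_mul_of_nonneg_right (by linarith) (norm_nonneg z)
        _ = ‖z‖ := one_mul _
    have hzA : ‖z‖ ≤ (2:ℝ)^(k+1) * A := by
      have h1 : ‖z‖ ≤ ∑ j ∈ Finset.range (k+1), |⟪u, e j⟫| := by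
        conv_lhs => rw [← span_rep e he k hz]
        refine (norm_sum_le _ _).trans (Finset.sum_le_sum fun j _ => ?_)
        rw [norm_smul, he.1 j, mul_one, Real.norm_eq_abs, hie j]
      have h2 : ∑ j ∈ Finset.range (k+1), |⟪u, e j⟫| ≤ (2:ℝ)^(k+1) * A := by
        rw [hA, Finset.mul_sum]
        refine Finset.sum_le_sum fun j hj => ?_
        have hj' := Finset.mem_range.1 hj
        have hpow : (1:ℝ) ≤ (2:ℝ)^(k+1) * (1/2:ℝ)^(j+1) := by
          rw [one_div, inv_pow, ← div_eq_mul_inv, le_div_iff₀ (by positivity)]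
          calc (1:ℝ) * (2:ℝ)^(j+1) = (2:ℝ)^(j+1) := one_mul _
            _ ≤ (2:ℝ)^(k+1) := pow_le_pow_right₀ (by norm_num) (by omega)
        calc |⟪u, e j⟫| = 1 * |⟪u, e j⟫| := (one_mul _).symm
          _ ≤ ((2:ℝ)^(k+1) * (1/2:ℝ)^(j+1)) * |⟪u, e j⟫| :=
              mul_le_mul_of_nonneg_right hpow (abs_nonneg _)
          _ = (2:ℝ)^(k+1) * ((1/2:ℝ)^(j+1) * |⟪u, e j⟫|) := by ring
      exact h1.trans h2
    constructor
    · rw [hsplit, htn]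
      have hpow2 : (1/2:ℝ)^(k+1) ≤ 1/2 := by
        calc (1/2:ℝ)^(k+1) ≤ (1/2:ℝ)^1 :=
            pow_le_pow_of_le_one (by norm_num) (by norm_num) (by omega)
          _ = 1/2 := pow_one _
      have h1 : A ≤ max S ‖z‖ := hAz.trans (le_max_right _ _)
      have h2 : (1/2:ℝ)^(k+1) * S ≤ (1/2) * max S ‖z‖ := by
        have h3 := le_max_left S ‖z‖
        have hnn : (0:ℝ) ≤ (1/2:ℝ)^(k+1) := by positivity
        nlinarith
      linarith
    · rw [hsplit, htn]
      have hone : (2:ℝ)^(k+1) * (1/2:ℝ)^(k+1) = 1 := by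
        rw [← mul_pow]; norm_num
      have hexp : (2:ℝ)^(k+1) * (A + (1/2:ℝ)^(k+1) * S)
          = (2:ℝ)^(k+1) * A + S := by
        rw [mul_add, ← mul_assoc, hone, one_mul]
      have h2nn : (0:ℝ) ≤ (2:ℝ)^(k+1) := by positivity
      apply max_le
      · rw [hexp]
        nlinarith
      · rw [hexp]
        linarith
  · -- τ-continuity of Pk
    subst hτ
    unfold topOfNormFun
    rw [continuous_generateFrom_iff]
    rintro s ⟨u, ε, hε, rfl⟩
    refine (@isOpen_iff_forall_mem_open X (TopologicalSpace.generateFrom _) _).mpr ?_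
    intro w₀ hw₀
    have hw₀' : tnorm (Pk w₀ - u) < ε := hw₀
    refine ⟨{w | tnorm (w - w₀) < ε - tnorm (Pk w₀ - u)}, ?_, ?_, ?_⟩
    · intro w hw
      have hw' : tnorm (w - w₀) < ε - tnorm (Pk w₀ - u) := hw
      show tnorm (Pk w - u) < ε
      have h1 : tnorm (Pk w - u) ≤ tnorm (Pk w - Pk w₀) + tnorm (Pk w₀ - u) := by
        have h := htadd (Pk w - Pk w₀) (Pk w₀ - u)
        rwa [show Pk w - Pk w₀ + (Pk w₀ - u) = Pk w - u by abel] at h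
      have h2 : tnorm (Pk w - Pk w₀) ≤ tnorm (w - w₀) := by
        rw [← hPksub]; exact hmono _
      linarith
    · exact TopologicalSpace.isOpen_generateFrom_of_mem
        ⟨w₀, ε - tnorm (Pk w₀ - u), by linarith, rfl⟩
    · show tnorm (w₀ - w₀) < ε - tnorm (Pk w₀ - u)
      rw [sub_self, htzero]
      linarith
end

section
/- Brezis–Lieb lemma: Let J : ℂ → ℂ be a continuous function with J(0) = 0 such that for every sufficiently small ε > 0 there exist two continuous nonnegative functions h_ε and g_ε satisfying |J(a+b) − J(a)| ≤ ε h_ε(a) + g_ε(b) for all a, b ∈ ℂ. Let u_n = u + v_n be a sequence of measurable functions from ℝ^N to ℂ such that (i) v_n → 0 almost everywhere, (ii) J(u) ∈ L¹(ℝ^N), (iii) limsup_n ∫_{ℝ^N} h_ε(v_n) dx ≤ C < ∞ for some constant C independent of ε, and (iv) ∫_{ℝ^N} g_ε(u) dx < ∞. Then ∫_{ℝ^N} |J(u + v_n) − J(v_n) − J(u)| dx → 0 as n → ∞. -/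
open Filter Topology MeasureTheory
open scoped ENNReal

private lemma aux_limsup_add_le (u v : ℕ → ℝ≥0∞) :
    Filter.limsup (u + v) Filter.atTop
      ≤ Filter.limsup u Filter.atTop + Filter.limsup v Filter.atTop := by
  refine ENNReal.le_of_forall_pos_le_add fun δ hδ hlt => ?_
  have hu : Filter.limsup u Filter.atTop < Filter.limsup u Filter.atTop + δ / 2 := by
    refine ENNReal.lt_add_right ?_ ?_
    · exact ne_top_of_le_ne_top hlt.ne le_self_add
    · simp [ENNReal.div_eq_zero_iff, hδ.ne']
  have hv : Filter.limsup v Filter.atTop < Filter.limsup v Filter.atTop + δ / 2 := by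
    refine ENNReal.lt_add_right ?_ ?_
    · exact ne_top_of_le_ne_top hlt.ne le_add_self
    · simp [ENNReal.div_eq_zero_iff, hδ.ne']
  have h1 := Filter.eventually_lt_of_limsup_lt hu
  have h2 := Filter.eventually_lt_of_limsup_lt hv
  have h3 : ∀ᶠ n in Filter.atTop, (u + v) n
      ≤ (Filter.limsup u Filter.atTop + δ / 2)
        + (Filter.limsup v Filter.atTop + δ / 2) := by
    filter_upwards [h1, h2] with n hn1 hn2
    exact add_le_add hn1.le hn2.le
  refine le_trans (Filter.limsup_le_of_le (by isBoundedDefault) h3) (le_of_eq ?_)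
  rw [add_add_add_comm, ENNReal.add_halves]

set_option maxHeartbeats 2000000 in
/-- **Brezis–Lieb lemma.** -/
theorem generalized_fountain_stmt_11
    (N : ℕ)
    (J : ℂ → ℂ) (hJ_cont : Continuous J) (hJ_zero : J 0 = 0)
    (ε₀ : ℝ) (hε₀ : 0 < ε₀)
    (h g : ℝ → ℂ → ℝ)
    (hhg : ∀ ε : ℝ, ε ∈ Set.Ioo 0 ε₀ →
      Continuous (h ε) ∧ Continuous (g ε) ∧
      (∀ z : ℂ, 0 ≤ h ε z) ∧ (∀ z : ℂ, 0 ≤ g ε z) ∧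
      ∀ a b : ℂ, ‖J (a + b) - J a‖ ≤ ε * h ε a + g ε b)
    (u : (Fin N → ℝ) → ℂ) (v : ℕ → (Fin N → ℝ) → ℂ)
    (hu_meas : Measurable u) (hv_meas : ∀ n, Measurable (v n))
    -- (i) v_n → 0 a.e.
    (hv_ae : ∀ᵐ x : Fin N → ℝ, Tendsto (fun n => v n x) atTop (𝓝 0))
    -- (ii) J(u) ∈ L¹(ℝ^N)
    (hJu : Integrable (fun x => J (u x)))
    -- (iii) limsup_n ∫ h_ε(v_n) ≤ C < ∞, C independent of ε
    (C : ℝ≥0∞) (hC : C < ⊤)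
    (hiii : ∀ ε : ℝ, ε ∈ Set.Ioo 0 ε₀ →
      Filter.limsup (fun n => ∫⁻ x, ENNReal.ofReal (h ε (v n x))) atTop ≤ C)
    -- (iv) ∫ g_ε(u) < ∞
    (hiv : ∀ ε : ℝ, ε ∈ Set.Ioo 0 ε₀ →
      (∫⁻ x, ENNReal.ofReal (g ε (u x))) < ⊤) :
    Tendsto (fun n => ∫⁻ x, ENNReal.ofReal ‖J (u x + v n x) - J (v n x) - J (u x)‖)
      atTop (𝓝 0) := by
  set L : ℕ → ℝ≥0∞ :=
    fun n => ∫⁻ x, ENNReal.ofReal ‖J (u x + v n x) - J (v n x) - J (u x)‖ with hL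
  have key : ∀ ε ∈ Set.Ioo (0:ℝ) ε₀,
      limsup L atTop ≤ ENNReal.ofReal ε * C := by
    intro ε hε
    obtain ⟨hh_cont, hg_cont, hh_nn, hg_nn, hineq⟩ := hhg ε hε
    have hεpos : 0 < ε := hε.1
    set f : ℕ → (Fin N → ℝ) → ℝ :=
      fun n x => max (‖J (u x + v n x) - J (v n x) - J (u x)‖ - ε * h ε (v n x)) 0 with hf
    -- f n x ≤ g ε (u x) + ‖J (u x)‖
    have hfle : ∀ n x, f n x ≤ g ε (u x) + ‖J (u x)‖ := by
      intro n x
      have h1 : ‖J (u x + v n x) - J (v n x) - J (u x)‖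
          ≤ ‖J (v n x + u x) - J (v n x)‖ + ‖J (u x)‖ := by
        rw [add_comm (u x)]
        exact norm_sub_le _ _
      have h2 : ‖J (v n x + u x) - J (v n x)‖ ≤ ε * h ε (v n x) + g ε (u x) :=
        hineq (v n x) (u x)
      have h3 : 0 ≤ g ε (u x) + ‖J (u x)‖ :=
        add_nonneg (hg_nn _) (norm_nonneg _)
      refine max_le ?_ h3
      linarith
    -- DCT : ∫⁻ ofReal (f n) → 0
    have hA : Tendsto (fun n => ∫⁻ x, ENNReal.ofReal (f n x)) atTop (𝓝 0) := by
      have h0 : (0:ℝ≥0∞) = ∫⁻ x : Fin N → ℝ, (fun _ => (0:ℝ≥0∞)) x := by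
        simp
      rw [h0]
      refine tendsto_lintegral_of_dominated_convergence
        (fun x => ENNReal.ofReal (g ε (u x) + ‖J (u x)‖)) ?_ ?_ ?_ ?_
      · intro n
        apply ENNReal.measurable_ofReal.comp
        apply Measurable.max _ measurable_const
        apply Measurable.sub
        · apply measurable_norm.comp
          apply Measurable.sub
          apply Measurable.sub
          · exact hJ_cont.measurable.comp (hu_meas.add (hv_meas n))
          · exact hJ_cont.measurable.comp (hv_meas n)
          · exact hJ_cont.measurable.comp hu_meas
        · exact (measurable_const.mul ((hh_cont.measurable).comp (hv_meas n)))
      · intro n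
        filter_upwards with x
        exact ENNReal.ofReal_le_ofReal (hfle n x)
      · have hm : AEMeasurable (fun x => ENNReal.ofReal (g ε (u x)))
            (volume : Measure (Fin N → ℝ)) :=
          (ENNReal.measurable_ofReal.comp (hg_cont.measurable.comp hu_meas)).aemeasurable
        have hle : (∫⁻ x, ENNReal.ofReal (g ε (u x) + ‖J (u x)‖))
            ≤ (∫⁻ x, ENNReal.ofReal (g ε (u x))) + ∫⁻ x, ENNReal.ofReal ‖J (u x)‖ := by
          calc (∫⁻ x, ENNReal.ofReal (g ε (u x) + ‖J (u x)‖))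
              ≤ ∫⁻ x, (ENNReal.ofReal (g ε (u x)) + ENNReal.ofReal ‖J (u x)‖) :=
                lintegral_mono fun x => ENNReal.ofReal_add_le
            _ = _ := lintegral_add_left' hm _
        refine ne_of_lt (lt_of_le_of_lt hle (ENNReal.add_lt_top.2 ⟨hiv ε hε, ?_⟩))
        simp_rw [ofReal_norm]
        exact hJu.2
      · filter_upwards [hv_ae] with x hx
        have hconv : Tendsto (fun n => f n x) atTop (𝓝 0) := by
          have h1 : Tendsto (fun n => v n x) atTop (𝓝 0) := hx
          have h2 : Tendsto (fun n => ‖J (u x + v n x) - J (v n x) - J (u x)‖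
              - ε * h ε (v n x)) atTop (𝓝 (‖J (u x + 0) - J 0 - J (u x)‖ - ε * h ε 0)) := by
            apply Tendsto.sub
            · apply (continuous_norm.tendsto _).comp
              apply Tendsto.sub
              apply Tendsto.sub
              · exact (hJ_cont.tendsto _).comp (tendsto_const_nhds.add h1)
              · exact (hJ_cont.tendsto _).comp h1
              · exact tendsto_const_nhds
            · exact tendsto_const_nhds.mul ((hh_cont.tendsto _).comp h1)
          simp only [add_zero, hJ_zero, sub_zero, sub_self, norm_zero, zero_sub] at h2
          have h3 : Tendsto (fun n => f n x) atTop (𝓝 (max (-(ε * h ε 0)) 0)) := by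
            simp only [hf]
            have : Tendsto (fun n => ‖J (u x + v n x) - J (v n x) - J (u x)‖
                - ε * h ε (v n x)) atTop (𝓝 (-(ε * h ε 0))) := h2
            exact this.max tendsto_const_nhds
          have h4 : max (-(ε * h ε 0)) 0 = 0 := by
            apply max_eq_right
            have := mul_nonneg hεpos.le (hh_nn 0)
            linarith
          rwa [h4] at h3
        have h5 := (ENNReal.continuous_ofReal.tendsto 0).comp hconv
        simp only [Function.comp_def, ENNReal.ofReal_zero] at h5
        exact h5
    -- pointwise splitting of L n
    have hsplit : ∀ n, L n ≤ (∫⁻ x, ENNReal.ofReal (f n x))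
        + ENNReal.ofReal ε * (∫⁻ x, ENNReal.ofReal (h ε (v n x))) := by
      intro n
      have hp : ∀ x, ENNReal.ofReal ‖J (u x + v n x) - J (v n x) - J (u x)‖
          ≤ ENNReal.ofReal (f n x) + ENNReal.ofReal ε * ENNReal.ofReal (h ε (v n x)) := by
        intro x
        rw [← ENNReal.ofReal_mul hεpos.le, ← ENNReal.ofReal_add (le_max_right _ _)
          (mul_nonneg hεpos.le (hh_nn _))]
        apply ENNReal.ofReal_le_ofReal
        have h6 := le_max_left (‖J (u x + v n x) - J (v n x) - J (u x)‖ - ε * h ε (v n x)) 0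
        linarith [h6]
      calc L n ≤ ∫⁻ x, (ENNReal.ofReal (f n x)
            + ENNReal.ofReal ε * ENNReal.ofReal (h ε (v n x))) := lintegral_mono hp
        _ = (∫⁻ x, ENNReal.ofReal (f n x))
            + ∫⁻ x, ENNReal.ofReal ε * ENNReal.ofReal (h ε (v n x)) := by
          apply lintegral_add_right'
          exact (ENNReal.measurable_ofReal.comp
            (hh_cont.measurable.comp (hv_meas n))).aemeasurable.const_mul _
        _ = (∫⁻ x, ENNReal.ofReal (f n x))
            + ENNReal.ofReal ε * ∫⁻ x, ENNReal.ofReal (h ε (v n x)) := by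
          rw [lintegral_const_mul' _ _ ENNReal.ofReal_ne_top]
    set A : ℕ → ℝ≥0∞ := fun n => ∫⁻ x, ENNReal.ofReal (f n x) with hAdef
    set B : ℕ → ℝ≥0∞ :=
      fun n => ENNReal.ofReal ε * ∫⁻ x, ENNReal.ofReal (h ε (v n x)) with hBdef
    have hBlim : limsup B atTop ≤ ENNReal.ofReal ε * C := by
      have heq : limsup B atTop = ENNReal.ofReal ε
          * limsup (fun n => ∫⁻ x, ENNReal.ofReal (h ε (v n x))) atTop :=
        ENNReal.limsup_const_mul_of_ne_top ENNReal.ofReal_ne_top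
      rw [heq]
      gcongr
      exact hiii ε hε
    calc limsup L atTop ≤ limsup (A + B) atTop :=
          limsup_le_limsup (Eventually.of_forall fun n => hsplit n)
      _ ≤ limsup A atTop + limsup B atTop := aux_limsup_add_le A B
      _ ≤ 0 + ENNReal.ofReal ε * C := by
          gcongr
          exact le_of_eq hA.limsup_eq
      _ = ENNReal.ofReal ε * C := by rw [zero_add]
  -- conclude limsup L = 0
  have hlimsup : limsup L atTop ≤ 0 := by
    have htends : Tendsto (fun ε : ℝ => ENNReal.ofReal ε * C) (𝓝[>] 0) (𝓝 0) := by
      have h1 : Tendsto (fun ε : ℝ => ENNReal.ofReal ε) (𝓝[>] 0) (𝓝 0) := by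
        have := (ENNReal.continuous_ofReal.tendsto 0)
        simpa using this.mono_left nhdsWithin_le_nhds
      simpa using ENNReal.Tendsto.mul_const h1 (Or.inr hC.ne)
    refine ge_of_tendsto htends ?_
    filter_upwards [Ioo_mem_nhdsGT_of_mem (by simp [hε₀] : (0:ℝ) ∈ Set.Ico 0 ε₀)] with ε hε
    exact key ε hε
  exact tendsto_of_le_liminf_of_limsup_le zero_le hlimsup
end
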